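/- arXiv:1005.3616 — 2 statements merged into one kernel-verified Lean document; each statement's English description precedes it below -/
import Mathlib

section
/- The discrete intervals hypergraph on n vertices satisfies cf(H_n) = um(H_n) = ⌊log₂ n⌋ + 1. -/
def IsCFColoring (E : Finset (Finset ℕ)) (C : ℕ → ℕ) : Prop :=
  ∀ e ∈ E, e.Nonempty → ∃ x ∈ e, ∀ y ∈ e, y ≠ x → C y ≠ C x

def IsUMColoring (E : Finset (Finset ℕ)) (C : ℕ → ℕ) : Prop :=
  ∀ e ∈ E, e.Nonempty → ∃ x ∈ e, ∀ y ∈ e, y ≠ x → C y < C x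

/-- The hyperedges of the discrete intervals hypergraph on `{1, …, n}`:
all nonempty intervals of consecutive integers. -/
def intervalEdges (n : ℕ) : Finset (Finset ℕ) :=
  ((Finset.Icc 1 n ×ˢ Finset.Icc 1 n).filter (fun p => p.1 ≤ p.2)).image
    (fun p => Finset.Icc p.1 p.2)

noncomputable def cfNum (n : ℕ) : ℕ :=
  sInf {k | ∃ C : ℕ → ℕ, (∀ v ∈ Finset.Icc 1 n, C v < k) ∧
    IsCFColoring (intervalEdges n) C}

noncomputable def umNum (n : ℕ) : ℕ :=
  sInf {k | ∃ C : ℕ → ℕ, (∀ v ∈ Finset.Icc 1 n, C v < k) ∧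
    IsUMColoring (intervalEdges n) C}

lemma mem_intervalEdges {n a b : ℕ} (h1 : 1 ≤ a) (h2 : a ≤ b) (h3 : b ≤ n) :
    Finset.Icc a b ∈ intervalEdges n := by
  refine Finset.mem_image.mpr ⟨(a, b), ?_, rfl⟩
  simp only [Finset.mem_filter, Finset.mem_product, Finset.mem_Icc]
  exact ⟨⟨⟨h1, le_trans h2 h3⟩, ⟨le_trans h1 h2, h3⟩⟩, h2⟩

lemma intervalEdges_struct {n : ℕ} {e : Finset ℕ} (he : e ∈ intervalEdges n) :
    ∃ a b, 1 ≤ a ∧ a ≤ b ∧ b ≤ n ∧ e = Finset.Icc a b := by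
  obtain ⟨⟨a, b⟩, hp, rfl⟩ := Finset.mem_image.mp he
  simp only [Finset.mem_filter, Finset.mem_product, Finset.mem_Icc] at hp
  exact ⟨a, b, hp.1.1.1, hp.2, hp.1.2.2, rfl⟩

/-- The 2-adic valuation coloring is a unique-maximum coloring. -/
lemma um_val (n : ℕ) : IsUMColoring (intervalEdges n) (fun v => v.factorization 2) := by
  intro e he hne
  obtain ⟨a, b, ha, hab, hbn, rfl⟩ := intervalEdges_struct he
  obtain ⟨x, hx, hmax⟩ := Finset.exists_max_image _ (fun v => v.factorization 2) hne
  refine ⟨x, hx, fun y hy hyx => ?_⟩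
  by_contra hlt
  push_neg at hlt
  have ht : y.factorization 2 = x.factorization 2 := le_antisymm (hmax y hy) hlt
  set t := x.factorization 2 with htdef
  -- let x' < y' be the two elements
  set x' := min x y
  set y' := max x y
  have hx'mem : x' ∈ Finset.Icc a b := by rcases min_choice x y with h | h <;> rw [show x' = min x y from rfl, h] <;> assumption
  have hy'mem : y' ∈ Finset.Icc a b := by rcases max_choice x y with h | h <;> rw [show y' = max x y from rfl, h] <;> assumption
  have hx'y' : x' < y' := by
    rcases lt_or_gt_of_ne hyx with h | h <;> omega
  have hfx' : x'.factorization 2 = t := by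
    rcases min_choice x y with h | h <;> rw [show x' = min x y from rfl, h] <;> simp [ht]
  have hfy' : y'.factorization 2 = t := by
    rcases max_choice x y with h | h <;> rw [show y' = max x y from rfl, h] <;> simp [ht]
  have hx'pos : 0 < x' := lt_of_lt_of_le ha (Finset.mem_Icc.mp hx'mem).1
  have hy'pos : 0 < y' := lt_of_lt_of_le ha (Finset.mem_Icc.mp hy'mem).1
  -- write x' = 2^t * m with m odd, y' = 2^t * m'
  have hxeq : 2 ^ t * (x' / 2 ^ t) = x' := by
    rw [← hfx']; exact Nat.ordProj_mul_ordCompl_eq_self x' 2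
  have hyeq : 2 ^ t * (y' / 2 ^ t) = y' := by
    rw [← hfy']; exact Nat.ordProj_mul_ordCompl_eq_self y' 2
  set m := x' / 2 ^ t
  set m' := y' / 2 ^ t
  have hmodd : ¬ 2 ∣ m := by
    have := Nat.not_dvd_ordCompl Nat.prime_two hx'pos.ne'
    rwa [hfx'] at this
  have hmm' : m < m' := by
    have h2t : 0 < 2 ^ t := Nat.pow_pos (by norm_num)
    have : 2 ^ t * m < 2 ^ t * m' := by rw [hxeq, hyeq]; exact hx'y'
    exact lt_of_mul_lt_mul_left this (Nat.zero_le _)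
  -- z = 2^t * (m+1) has valuation > t and lies in the interval
  set z := 2 ^ t * (m + 1)
  have hz0 : z ≠ 0 := by positivity
  have hzval : t + 1 ≤ z.factorization 2 := by
    rw [← Nat.Prime.pow_dvd_iff_le_factorization Nat.prime_two hz0]
    obtain ⟨c, hc⟩ : 2 ∣ m + 1 := by omega
    exact ⟨c, by rw [show z = 2 ^ t * (m + 1) from rfl, hc, pow_succ]; ring⟩
  have hzx' : x' < z := by
    calc x' = 2 ^ t * m := hxeq.symm
    _ < 2 ^ t * (m + 1) := by
        have h2t : 0 < 2 ^ t := Nat.pow_pos (by norm_num)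
        exact Nat.mul_lt_mul_of_le_of_lt (le_refl (2 ^ t)) (Nat.lt_succ_self m) h2t
  have hzy' : z ≤ y' := by
    calc z = 2 ^ t * (m + 1) := rfl
    _ ≤ 2 ^ t * m' := Nat.mul_le_mul_left _ (by omega)
    _ = y' := hyeq
  have hzmem : z ∈ Finset.Icc a b := by
    rw [Finset.mem_Icc]
    have h1 := Finset.mem_Icc.mp hx'mem
    have h2 := Finset.mem_Icc.mp hy'mem
    omega
  have := hmax z hzmem
  omega

lemma val_lt (n : ℕ) (hn : 1 ≤ n) :
    ∀ v ∈ Finset.Icc 1 n, v.factorization 2 < Nat.log 2 n + 1 := by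
  intro v hv
  rw [Finset.mem_Icc] at hv
  have hdvd : 2 ^ (v.factorization 2) ∣ v := Nat.ordProj_dvd v 2
  have hle : 2 ^ (v.factorization 2) ≤ n :=
    le_trans (Nat.le_of_dvd (by omega) hdvd) hv.2
  have := Nat.le_log_of_pow_le (by norm_num) hle
  omega

/-- lower bound: any CF coloring uses at least k+1 colors on an interval of length ≥ 2^k. -/
lemma cf_lower (n : ℕ) (C : ℕ → ℕ) (hC : IsCFColoring (intervalEdges n) C) :
    ∀ k a b, 1 ≤ a → b ≤ n → a + 2 ^ k ≤ b + 1 →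
      k + 1 ≤ ((Finset.Icc a b).image C).card := by
  intro k
  induction k with
  | zero =>
    intro a b ha hb hlen
    have hne : (Finset.Icc a b).Nonempty := Finset.nonempty_Icc.mpr (by omega)
    have := Finset.card_pos.mpr (hne.image C)
    omega
  | succ k ih =>
    intro a b ha hb hlen
    have hab : a ≤ b := by have := Nat.one_le_two_pow (n := k + 1); omega
    have hne : (Finset.Icc a b).Nonempty := Finset.nonempty_Icc.mpr hab
    obtain ⟨x, hx, huniq⟩ := hC _ (mem_intervalEdges ha hab hb) hne
    rw [Finset.mem_Icc] at hx
    have h2 : 2 ^ (k + 1) = 2 ^ k + 2 ^ k := by rw [pow_succ]; ring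
    have hcase : a + 2 ^ k ≤ x ∨ x + 2 ^ k ≤ b := by omega
    rcases hcase with hc | hc
    · -- left side [a, x-1]
      have hsub : Finset.Icc a (x - 1) ⊆ Finset.Icc a b := by
        apply Finset.Icc_subset_Icc_right; omega
      have hih := ih a (x - 1) ha (by omega) (by omega)
      have hnotmem : C x ∉ (Finset.Icc a (x - 1)).image C := by
        rw [Finset.mem_image]
        rintro ⟨y, hy, hCy⟩
        rw [Finset.mem_Icc] at hy
        exact huniq y (Finset.mem_Icc.mpr (by omega)) (by omega) hCy
      have hsub2 : insert (C x) ((Finset.Icc a (x - 1)).image C) ⊆ (Finset.Icc a b).image C := by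
        intro c hc'
        rcases Finset.mem_insert.mp hc' with h | h
        · exact h ▸ Finset.mem_image_of_mem C (Finset.mem_Icc.mpr (by omega))
        · exact Finset.image_subset_image hsub h
      have := Finset.card_le_card hsub2
      rw [Finset.card_insert_of_notMem hnotmem] at this
      omega
    · -- right side [x+1, b]
      have hsub : Finset.Icc (x + 1) b ⊆ Finset.Icc a b := by
        apply Finset.Icc_subset_Icc_left; omega
      have hih := ih (x + 1) b (by omega) hb (by omega)
      have hnotmem : C x ∉ (Finset.Icc (x + 1) b).image C := by
        rw [Finset.mem_image]
        rintro ⟨y, hy, hCy⟩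
        rw [Finset.mem_Icc] at hy
        exact huniq y (Finset.mem_Icc.mpr (by omega)) (by omega) hCy
      have hsub2 : insert (C x) ((Finset.Icc (x + 1) b).image C) ⊆ (Finset.Icc a b).image C := by
        intro c hc'
        rcases Finset.mem_insert.mp hc' with h | h
        · exact h ▸ Finset.mem_image_of_mem C (Finset.mem_Icc.mpr (by omega))
        · exact Finset.image_subset_image hsub h
      have := Finset.card_le_card hsub2
      rw [Finset.card_insert_of_notMem hnotmem] at this
      omega

/-- The discrete intervals hypergraph on `n` vertices satisfies
`cf(H_n) = um(H_n) = ⌊log₂ n⌋ + 1`. -/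
theorem cf_um_discrete_intervals (n : ℕ) (hn : 1 ≤ n) :
    cfNum n = Nat.log 2 n + 1 ∧ umNum n = Nat.log 2 n + 1 := by
  set L := Nat.log 2 n + 1 with hL
  -- membership: the valuation coloring is UM (hence CF)
  have hum : IsUMColoring (intervalEdges n) (fun v => v.factorization 2) := um_val n
  have hcf : IsCFColoring (intervalEdges n) (fun v => v.factorization 2) := by
    intro e he hne
    obtain ⟨x, hx, h⟩ := hum e he hne
    exact ⟨x, hx, fun y hy hyx => Nat.ne_of_lt (h y hy hyx)⟩
  have hmemUM : L ∈ {k | ∃ C : ℕ → ℕ, (∀ v ∈ Finset.Icc 1 n, C v < k) ∧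
      IsUMColoring (intervalEdges n) C} := ⟨_, val_lt n hn, hum⟩
  have hmemCF : L ∈ {k | ∃ C : ℕ → ℕ, (∀ v ∈ Finset.Icc 1 n, C v < k) ∧
      IsCFColoring (intervalEdges n) C} := ⟨_, val_lt n hn, hcf⟩
  -- lower bound for any CF coloring
  have hlb : ∀ k, (∃ C : ℕ → ℕ, (∀ v ∈ Finset.Icc 1 n, C v < k) ∧
      IsCFColoring (intervalEdges n) C) → L ≤ k := by
    rintro k ⟨C, hCk, hC⟩
    have hpow : 2 ^ Nat.log 2 n ≤ n := Nat.pow_log_le_self 2 (by omega)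
    have hcard := cf_lower n C hC (Nat.log 2 n) 1 n le_rfl le_rfl (by omega)
    have hsub : (Finset.Icc 1 n).image C ⊆ Finset.range k := by
      intro c hc
      obtain ⟨v, hv, rfl⟩ := Finset.mem_image.mp hc
      exact Finset.mem_range.mpr (hCk v hv)
    have := Finset.card_le_card hsub
    rw [Finset.card_range] at this
    omega
  constructor
  · exact le_antisymm (Nat.sInf_le hmemCF) (le_csInf ⟨L, hmemCF⟩ hlb)
  · refine le_antisymm (Nat.sInf_le hmemUM) (le_csInf ⟨L, hmemUM⟩ ?_)
    rintro k ⟨C, hCk, hC⟩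
    refine hlb k ⟨C, hCk, fun e he hne => ?_⟩
    obtain ⟨x, hx, h⟩ := hC e he hne
    exact ⟨x, hx, fun y hy hyx => Nat.ne_of_lt (h y hy hyx)⟩
end

section
/- For the discrete intervals hypergraph on n = 2^k - 1 vertices, there exists a unique-maximum coloring using k colors. -/
lemma um_between (m x y : ℕ) (hx : x ≠ 0) (hxy : x < y)
    (hvx : padicValNat 2 x = m) (hvy : padicValNat 2 y = m) :
    ∃ z, x < z ∧ z ≤ y ∧ m < padicValNat 2 z := by
  have hdx : 2 ^ m ∣ x := hvx ▸ pow_padicValNat_dvd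
  have hdy : 2 ^ m ∣ y := hvy ▸ pow_padicValNat_dvd
  have hndx : ¬ 2 ^ (m+1) ∣ x := by
    rw [← hvx]; exact pow_succ_padicValNat_not_dvd (p := 2) hx
  have hpm : 0 < 2 ^ m := Nat.pow_pos (by norm_num)
  refine ⟨x + 2 ^ m, by omega, ?_, ?_⟩
  · have h1 : 2 ^ m ∣ y - x := Nat.dvd_sub hdy hdx
    have h2 : 2 ^ m ≤ y - x := Nat.le_of_dvd (by omega) h1
    omega
  · obtain ⟨s, rfl⟩ := hdx
    have hs : s % 2 = 1 := by
      rcases Nat.even_or_odd s with he | ho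
      · exfalso; obtain ⟨t, rfl⟩ := he
        exact hndx ⟨t, by ring⟩
      · exact Nat.odd_iff.mp ho
    obtain ⟨t, ht⟩ : ∃ t, s = 2 * t + 1 := ⟨s / 2, by omega⟩
    have hz : 2 ^ (m+1) ∣ 2 ^ m * s + 2 ^ m := ⟨t + 1, by subst ht; ring⟩
    have hz0 : 2 ^ m * s + 2 ^ m ≠ 0 := by positivity
    have := (padicValNat_dvd_iff_le (p := 2) hz0).mp hz
    omega

/-- The discrete intervals hypergraph on `n = 2^k - 1` vertices admits a
unique-maximum coloring with `k` colors. -/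
theorem um_coloring_of_pow_sub_one (k : ℕ) :
    ∃ C : ℕ → ℕ, (∀ v ∈ Finset.Icc 1 (2 ^ k - 1), C v < k) ∧
      IsUMColoring (intervalEdges (2 ^ k - 1)) C := by
  refine ⟨padicValNat 2, ?_, ?_⟩
  · intro v hv
    simp only [Finset.mem_Icc] at hv
    have hv0 : v ≠ 0 := by omega
    have hd : 2 ^ padicValNat 2 v ∣ v := pow_padicValNat_dvd
    have h1 : 2 ^ padicValNat 2 v ≤ v := Nat.le_of_dvd (by omega) hd
    have hvk : 1 ≤ 2 ^ k := Nat.one_le_two_pow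
    by_contra h
    push_neg at h
    have := Nat.pow_le_pow_right (show 0 < 2 by norm_num) h
    omega
  · intro e he hne
    simp only [intervalEdges, Finset.mem_image, Finset.mem_filter,
      Finset.mem_product, Finset.mem_Icc] at he
    obtain ⟨⟨a, b⟩, ⟨⟨⟨ha1, _⟩, _⟩, hle⟩, rfl⟩ := he
    obtain ⟨x, hx, hmax⟩ := Finset.exists_max_image (Finset.Icc a b) (padicValNat 2)
      ⟨a, Finset.mem_Icc.mpr ⟨le_refl a, hle⟩⟩
    refine ⟨x, hx, ?_⟩
    intro y hy hyx
    rcases lt_or_eq_of_le (hmax y hy) with h | h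
    · exact h
    exfalso
    simp only [Finset.mem_Icc] at hx hy
    have hy0 : y ≠ 0 := by omega
    have hx0 : x ≠ 0 := by omega
    rcases Nat.lt_or_ge x y with hxy | hxy
    · obtain ⟨z, hz1, hz2, hz3⟩ := um_between (padicValNat 2 x) x y hx0 hxy rfl h
      have := hmax z (Finset.mem_Icc.mpr ⟨by omega, by omega⟩)
      omega
    · have hyx' : y < x := by omega
      obtain ⟨z, hz1, hz2, hz3⟩ := um_between (padicValNat 2 x) y x hy0 hyx' h rfl
      have := hmax z (Finset.mem_Icc.mpr ⟨by omega, by omega⟩)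
      omega
end
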